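/- arXiv:1401.0970 — 4 statements merged into one kernel-verified Lean document; each statement's English description precedes it below -/
import Mathlib

section
/- Given a signature morphism σ = ⟨σ_P, σ_A, σ_E⟩ : ⟨P₁,A₁,E₁⟩ → ⟨P₂,A₂,E₂⟩ and a component C₂ = ⟨P₂,A₂,E₂,π₂,δ₂,ε₂⟩, the pullback component σ*(C₂) = ⟨P₁,A₁,E₁, a ↦ Sen(σ_P)⁻¹(π₂(σ_A(a))), a ↦ Sen(σ_P)⁻¹(δ₂(σ_A(a))), e ↦ σ_A⁻¹(ε₂(σ_E(e)))⟩ is a component, and σ is a component morphism σ*(C₂) → C₂; moreover, σ*(C₂) is the largest component structure on ⟨P₁,A₁,E₁⟩ for which σ is a component morphism into C₂ (any component C₁ on the signature ⟨P₁,A₁,E₁⟩ such that σ : C₁ → C₂ is a component morphism satisfies π₁(a) ⊆ Sen(σ_P)⁻¹(π₂(σ_A(a))), etc.). -/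
open CategoryTheory

/-- A component over a sentence functor `Sen`. -/
structure Component (Sen : Type ⥤ Type) where
  P : Type
  A : Type
  E : Type
  pres : A → Set (Sen.obj P)
  desc : A → Set (Sen.obj P)
  obs : E → Set A

/-- A component morphism. -/
structure CompHom {Sen : Type ⥤ Type} (C₁ C₂ : Component Sen) where
  σP : C₁.P → C₂.P
  σA : C₁.A → C₂.A
  σE : C₁.E → C₂.E
  hpres : ∀ a, Sen.map (TypeCat.ofHom σP) '' C₁.pres a ⊆ C₂.pres (σA a)
  hdesc : ∀ a, Sen.map (TypeCat.ofHom σP) '' C₁.desc a ⊆ C₂.desc (σA a)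
  hobs : ∀ e, σA '' C₁.obs e ⊆ C₂.obs (σE e)

@[ext] theorem CompHom.ext' {Sen : Type ⥤ Type} {C₁ C₂ : Component Sen}
    {f g : CompHom C₁ C₂} (h1 : f.σP = g.σP) (h2 : f.σA = g.σA) (h3 : f.σE = g.σE) :
    f = g := by
  cases f; cases g; simp_all

def CompHom.id {Sen : Type ⥤ Type} (C : Component Sen) : CompHom C C where
  σP := _root_.id
  σA := _root_.id
  σE := _root_.id
  hpres := by
    intro a x hx
    obtain ⟨y, hy, rfl⟩ := hx
    have : Sen.map (TypeCat.ofHom (_root_.id : C.P → C.P)) y = y := by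
      rw [show TypeCat.ofHom (_root_.id : C.P → C.P) = 𝟙 C.P from rfl, Sen.map_id]; rfl
    rwa [this]
  hdesc := by
    intro a x hx
    obtain ⟨y, hy, rfl⟩ := hx
    have : Sen.map (TypeCat.ofHom (_root_.id : C.P → C.P)) y = y := by
      rw [show TypeCat.ofHom (_root_.id : C.P → C.P) = 𝟙 C.P from rfl, Sen.map_id]; rfl
    rwa [this]
  hobs := by intro e x hx; simpa using hx

def CompHom.comp {Sen : Type ⥤ Type} {C₁ C₂ C₃ : Component Sen}
    (f : CompHom C₁ C₂) (g : CompHom C₂ C₃) : CompHom C₁ C₃ where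
  σP := g.σP ∘ f.σP
  σA := g.σA ∘ f.σA
  σE := g.σE ∘ f.σE
  hpres := by
    intro a x hx
    obtain ⟨y, hy, rfl⟩ := hx
    have hmap : Sen.map (TypeCat.ofHom (g.σP ∘ f.σP)) y =
        Sen.map (TypeCat.ofHom g.σP) (Sen.map (TypeCat.ofHom f.σP) y) := by
      rw [show TypeCat.ofHom (g.σP ∘ f.σP) = TypeCat.ofHom f.σP ≫ TypeCat.ofHom g.σP from rfl,
        Sen.map_comp]; rfl
    rw [hmap]
    exact g.hpres (f.σA a) ⟨_, f.hpres a ⟨y, hy, rfl⟩, rfl⟩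
  hdesc := by
    intro a x hx
    obtain ⟨y, hy, rfl⟩ := hx
    have hmap : Sen.map (TypeCat.ofHom (g.σP ∘ f.σP)) y =
        Sen.map (TypeCat.ofHom g.σP) (Sen.map (TypeCat.ofHom f.σP) y) := by
      rw [show TypeCat.ofHom (g.σP ∘ f.σP) = TypeCat.ofHom f.σP ≫ TypeCat.ofHom g.σP from rfl,
        Sen.map_comp]; rfl
    rw [hmap]
    exact g.hdesc (f.σA a) ⟨_, f.hdesc a ⟨y, hy, rfl⟩, rfl⟩
  hobs := by
    intro e x hx
    obtain ⟨y, hy, rfl⟩ := hx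
    exact g.hobs (f.σE e) ⟨_, f.hobs e ⟨y, hy, rfl⟩, rfl⟩

instance Sys.category (Sen : Type ⥤ Type) : Category (Component Sen) where
  Hom := CompHom
  id := CompHom.id
  comp := CompHom.comp
  id_comp := by intros; rfl
  comp_id := by intros; rfl
  assoc := by intros; rfl

/-- The pullback component `σ*(C₂)` along a signature morphism
`σ = ⟨σP, σA, σE⟩ : ⟨P₁,A₁,E₁⟩ → ⟨P₂,A₂,E₂⟩`. -/
def pullbackComp (Sen : Type ⥤ Type) {P₁ A₁ E₁ : Type} (C₂ : Component Sen)
    (σP : P₁ → C₂.P) (σA : A₁ → C₂.A) (σE : E₁ → C₂.E) : Component Sen where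
  P := P₁
  A := A₁
  E := E₁
  pres a := Sen.map (TypeCat.ofHom σP) ⁻¹' C₂.pres (σA a)
  desc a := Sen.map (TypeCat.ofHom σP) ⁻¹' C₂.desc (σA a)
  obs e := σA ⁻¹' C₂.obs (σE e)

/-- `σ*(C₂)` is a component (by construction), `σ` is a component
morphism `σ*(C₂) → C₂`, and `σ*(C₂)` is the largest component structure on the
signature `⟨P₁,A₁,E₁⟩` for which `σ` is a component morphism into `C₂`. -/
theorem pullback_component (Sen : Type ⥤ Type) {P₁ A₁ E₁ : Type}
    (C₂ : Component Sen) (σP : P₁ → C₂.P) (σA : A₁ → C₂.A) (σE : E₁ → C₂.E) :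
    (∃ h : CompHom (pullbackComp Sen C₂ σP σA σE) C₂,
        h.σP = σP ∧ h.σA = σA ∧ h.σE = σE) ∧
    (∀ (π₁ δ₁ : A₁ → Set (Sen.obj P₁)) (ε₁ : E₁ → Set A₁),
        (∀ a, Sen.map (TypeCat.ofHom σP) '' π₁ a ⊆ C₂.pres (σA a)) →
        (∀ a, Sen.map (TypeCat.ofHom σP) '' δ₁ a ⊆ C₂.desc (σA a)) →
        (∀ e, σA '' ε₁ e ⊆ C₂.obs (σE e)) →
        (∀ a, π₁ a ⊆ (pullbackComp Sen C₂ σP σA σE).pres a) ∧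
        (∀ a, δ₁ a ⊆ (pullbackComp Sen C₂ σP σA σE).desc a) ∧
        (∀ e, ε₁ e ⊆ (pullbackComp Sen C₂ σP σA σE).obs e)) := by
  constructor
  · refine ⟨⟨σP, σA, σE, ?_, ?_, ?_⟩, rfl, rfl, rfl⟩
    · rintro a x ⟨y, hy, rfl⟩; exact hy
    · rintro a x ⟨y, hy, rfl⟩; exact hy
    · rintro e x ⟨y, hy, rfl⟩; exact hy
  · intro π₁ δ₁ ε₁ hπ hδ hε
    exact ⟨fun a x hx => hπ a ⟨x, hx, rfl⟩,
           fun a x hx => hδ a ⟨x, hx, rfl⟩,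
           fun e x hx => hε e ⟨x, hx, rfl⟩⟩
end

section
/- The category Sys of components and component morphisms has binary coproducts: the coproduct of C₁ = ⟨P₁,A₁,E₁,π₁,δ₁,ε₁⟩ and C₂ = ⟨P₂,A₂,E₂,π₂,δ₂,ε₂⟩ is the component on the signature ⟨P₁⊎P₂, A₁⊎A₂, E₁⊎E₂⟩ whose prescription at an action inl(a) is the image of π₁(a) under Sen(inl_P) (and symmetrically for inr and for δ and ε), together with the evident inclusion morphisms; it satisfies the universal property of coproducts in Sys. -/
open CategoryTheory

/-- The coproduct component of `C₁` and `C₂`: the signature is the componentwise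
disjoint union, and the prescriptions, descriptions and event-observation sets
are the direct images of those of `C₁` and `C₂` along the injections. -/
def coprodComp {Sen : Type ⥤ Type} (C₁ C₂ : Component Sen) : Component Sen where
  P := C₁.P ⊕ C₂.P
  A := C₁.A ⊕ C₂.A
  E := C₁.E ⊕ C₂.E
  pres := Sum.elim (fun a => Sen.map (TypeCat.ofHom Sum.inl) '' C₁.pres a)
                   (fun a => Sen.map (TypeCat.ofHom Sum.inr) '' C₂.pres a)
  desc := Sum.elim (fun a => Sen.map (TypeCat.ofHom Sum.inl) '' C₁.desc a)
                   (fun a => Sen.map (TypeCat.ofHom Sum.inr) '' C₂.desc a)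
  obs := Sum.elim (fun e => Sum.inl '' C₁.obs e) (fun e => Sum.inr '' C₂.obs e)

/-- `Sys` has binary coproducts, given by `coprodComp` together
with the evident inclusion morphisms, satisfying the universal property. -/
theorem sys_binary_coproducts (Sen : Type ⥤ Type) (C₁ C₂ : Component Sen) :
    ∃ (inl : CompHom C₁ (coprodComp C₁ C₂)) (inr : CompHom C₂ (coprodComp C₁ C₂)),
      inl.σP = Sum.inl ∧ inl.σA = Sum.inl ∧ inl.σE = Sum.inl ∧
      inr.σP = Sum.inr ∧ inr.σA = Sum.inr ∧ inr.σE = Sum.inr ∧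
      ∀ (D : Component Sen) (f : CompHom C₁ D) (g : CompHom C₂ D),
        ∃! h : CompHom (coprodComp C₁ C₂) D, inl.comp h = f ∧ inr.comp h = g := by
  refine ⟨⟨Sum.inl, Sum.inl, Sum.inl, fun a => subset_rfl, fun a => subset_rfl,
      fun e => subset_rfl⟩,
    ⟨Sum.inr, Sum.inr, Sum.inr, fun a => subset_rfl, fun a => subset_rfl,
      fun e => subset_rfl⟩,
    rfl, rfl, rfl, rfl, rfl, rfl, ?_⟩
  intro D f g
  have hcomp : ∀ (X₁ X₂ : Type) (u : X₁ → X₂) (p : X₂ → D.P) (y : Sen.obj X₁),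
      Sen.map (TypeCat.ofHom p) (Sen.map (TypeCat.ofHom u) y) =
        Sen.map (TypeCat.ofHom (p ∘ u)) y := by
    intro X₁ X₂ u p y
    rw [show TypeCat.ofHom (p ∘ u) = TypeCat.ofHom u ≫ TypeCat.ofHom p from rfl,
      Sen.map_comp]; rfl
  refine ⟨⟨Sum.elim f.σP g.σP, Sum.elim f.σA g.σA, Sum.elim f.σE g.σE, ?_, ?_, ?_⟩,
    ⟨?_, ?_⟩, ?_⟩
  · rintro (a | a) x ⟨y, ⟨z, hz, rfl⟩, rfl⟩
    · erw [hcomp]; exact f.hpres a ⟨z, hz, rfl⟩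
    · erw [hcomp]; exact g.hpres a ⟨z, hz, rfl⟩
  · rintro (a | a) x ⟨y, ⟨z, hz, rfl⟩, rfl⟩
    · erw [hcomp]; exact f.hdesc a ⟨z, hz, rfl⟩
    · erw [hcomp]; exact g.hdesc a ⟨z, hz, rfl⟩
  · rintro (e | e) x ⟨y, ⟨z, hz, rfl⟩, rfl⟩
    · exact f.hobs e ⟨z, hz, rfl⟩
    · exact g.hobs e ⟨z, hz, rfl⟩
  · apply CompHom.ext' <;> rfl
  · apply CompHom.ext' <;> rfl
  · rintro h ⟨rfl, rfl⟩
    apply CompHom.ext' <;> funext x <;> cases x <;> rfl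
end

section
/- A component morphism ⟨σ_P, σ_A, σ_E⟩ : C₁ → C₂ in Sys is an isomorphism if and only if σ_P, σ_A, σ_E are bijections and for all actions a of C₁ and events e of C₁: Sen(σ_P)(π₁(a)) = π₂(σ_A(a)), Sen(σ_P)(δ₁(a)) = δ₂(σ_A(a)), and σ_A(ε₁(e)) = ε₂(σ_E(e)); here Sen is assumed to preserve monomorphisms (injections). -/
open CategoryTheory

/-- assuming `Sen` preserves injections, a component morphism is
an isomorphism (has a two-sided inverse component morphism) iff its three
signature components are bijections and the direct images of prescriptions,
descriptions and event-observation sets are exactly the corresponding sets of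
the target. -/
theorem compHom_iso_iff (Sen : Type ⥤ Type)
    (hSen : ∀ {X Y : Type} (g : X → Y), Function.Injective g →
      Function.Injective (Sen.map (TypeCat.ofHom g)))
    {C₁ C₂ : Component Sen} (f : CompHom C₁ C₂) :
    (∃ g : CompHom C₂ C₁, f.comp g = CompHom.id C₁ ∧ g.comp f = CompHom.id C₂) ↔
    (Function.Bijective f.σP ∧ Function.Bijective f.σA ∧ Function.Bijective f.σE ∧
      (∀ a : C₁.A, Sen.map (TypeCat.ofHom f.σP) '' C₁.pres a = C₂.pres (f.σA a)) ∧
      (∀ a : C₁.A, Sen.map (TypeCat.ofHom f.σP) '' C₁.desc a = C₂.desc (f.σA a)) ∧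
      (∀ e : C₁.E, f.σA '' C₁.obs e = C₂.obs (f.σE e))) := by
  constructor
  · rintro ⟨g, hfg, hgf⟩
    have hPgf : ∀ x, g.σP (f.σP x) = x := fun x =>
      congrFun (congrArg CompHom.σP hfg) x
    have hPfg : ∀ x, f.σP (g.σP x) = x := fun x =>
      congrFun (congrArg CompHom.σP hgf) x
    have hAgf : ∀ x, g.σA (f.σA x) = x := fun x =>
      congrFun (congrArg CompHom.σA hfg) x
    have hAfg : ∀ x, f.σA (g.σA x) = x := fun x =>
      congrFun (congrArg CompHom.σA hgf) x
    have hEgf : ∀ x, g.σE (f.σE x) = x := fun x =>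
      congrFun (congrArg CompHom.σE hfg) x
    have hEfg : ∀ x, f.σE (g.σE x) = x := fun x =>
      congrFun (congrArg CompHom.σE hgf) x
    have hSfg : ∀ y, Sen.map (TypeCat.ofHom f.σP) (Sen.map (TypeCat.ofHom g.σP) y) = y := by
      intro y
      have hc : TypeCat.ofHom g.σP ≫ TypeCat.ofHom f.σP = 𝟙 C₂.P := by
        rw [show TypeCat.ofHom g.σP ≫ TypeCat.ofHom f.σP = TypeCat.ofHom (f.σP ∘ g.σP) from rfl,
          show f.σP ∘ g.σP = _root_.id from funext hPfg]; rfl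
      have := congrArg (fun h => Sen.map h y) hc
      simp only [Sen.map_comp, Sen.map_id] at this
      simpa using this
    refine ⟨⟨fun x y h => by rw [← hPgf x, h, hPgf], fun y => ⟨g.σP y, hPfg y⟩⟩,
      ⟨fun x y h => by rw [← hAgf x, h, hAgf], fun y => ⟨g.σA y, hAfg y⟩⟩,
      ⟨fun x y h => by rw [← hEgf x, h, hEgf], fun y => ⟨g.σE y, hEfg y⟩⟩, ?_, ?_, ?_⟩
    · intro a
      refine Set.Subset.antisymm (f.hpres a) ?_
      intro x hx
      have h1 : Sen.map (TypeCat.ofHom g.σP) x ∈ C₁.pres (g.σA (f.σA a)) :=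
        g.hpres (f.σA a) ⟨x, hx, rfl⟩
      rw [hAgf] at h1
      exact ⟨Sen.map (TypeCat.ofHom g.σP) x, h1, hSfg x⟩
    · intro a
      refine Set.Subset.antisymm (f.hdesc a) ?_
      intro x hx
      have h1 : Sen.map (TypeCat.ofHom g.σP) x ∈ C₁.desc (g.σA (f.σA a)) :=
        g.hdesc (f.σA a) ⟨x, hx, rfl⟩
      rw [hAgf] at h1
      exact ⟨Sen.map (TypeCat.ofHom g.σP) x, h1, hSfg x⟩
    · intro e
      refine Set.Subset.antisymm (f.hobs e) ?_
      intro x hx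
      have h1 : g.σA x ∈ C₁.obs (g.σE (f.σE e)) := g.hobs (f.σE e) ⟨x, hx, rfl⟩
      rw [hEgf] at h1
      exact ⟨g.σA x, h1, hAfg x⟩
  · rintro ⟨hP, hA, hE, h4, h5, h6⟩
    let eP := Equiv.ofBijective f.σP hP
    let eA := Equiv.ofBijective f.σA hA
    let eE := Equiv.ofBijective f.σE hE
    have hPgf : ∀ x, eP.symm (f.σP x) = x := fun x => eP.symm_apply_apply x
    have hPfg : ∀ x, f.σP (eP.symm x) = x := fun x => eP.apply_symm_apply x
    have hAgf : ∀ x, eA.symm (f.σA x) = x := fun x => eA.symm_apply_apply x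
    have hAfg : ∀ x, f.σA (eA.symm x) = x := fun x => eA.apply_symm_apply x
    have hEgf : ∀ x, eE.symm (f.σE x) = x := fun x => eE.symm_apply_apply x
    have hEfg : ∀ x, f.σE (eE.symm x) = x := fun x => eE.apply_symm_apply x
    have hSgf : ∀ x, Sen.map (TypeCat.ofHom (⇑eP.symm)) (Sen.map (TypeCat.ofHom f.σP) x) = x := by
      intro x
      have hc : TypeCat.ofHom f.σP ≫ TypeCat.ofHom (⇑eP.symm) = 𝟙 C₁.P := by
        rw [show TypeCat.ofHom f.σP ≫ TypeCat.ofHom (⇑eP.symm) = TypeCat.ofHom (⇑eP.symm ∘ f.σP) from rfl,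
          show ⇑eP.symm ∘ f.σP = _root_.id from funext hPgf]; rfl
      have := congrArg (fun h => Sen.map h x) hc
      simp only [Sen.map_comp, Sen.map_id] at this
      simpa using this
    have hSfg : ∀ x, Sen.map (TypeCat.ofHom f.σP) (Sen.map (TypeCat.ofHom (⇑eP.symm)) x) = x := by
      intro x
      have hc : TypeCat.ofHom (⇑eP.symm) ≫ TypeCat.ofHom f.σP = 𝟙 C₂.P := by
        rw [show TypeCat.ofHom (⇑eP.symm) ≫ TypeCat.ofHom f.σP = TypeCat.ofHom (f.σP ∘ ⇑eP.symm) from rfl,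
          show f.σP ∘ ⇑eP.symm = _root_.id from funext hPfg]; rfl
      have := congrArg (fun h => Sen.map h x) hc
      simp only [Sen.map_comp, Sen.map_id] at this
      simpa using this
    refine ⟨⟨⇑eP.symm, ⇑eA.symm, ⇑eE.symm, ?_, ?_, ?_⟩, ?_, ?_⟩
    · rintro a x ⟨y, hy, rfl⟩
      have : y ∈ C₂.pres (f.σA (eA.symm a)) := by rwa [hAfg]
      rw [← h4] at this
      obtain ⟨z, hz, rfl⟩ := this
      rw [hSgf]
      exact hz
    · rintro a x ⟨y, hy, rfl⟩
      have : y ∈ C₂.desc (f.σA (eA.symm a)) := by rwa [hAfg]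
      rw [← h5] at this
      obtain ⟨z, hz, rfl⟩ := this
      rw [hSgf]
      exact hz
    · rintro e x ⟨y, hy, rfl⟩
      have : y ∈ C₂.obs (f.σE (eE.symm e)) := by rwa [hEfg]
      rw [← h6] at this
      obtain ⟨z, hz, rfl⟩ := this
      rw [hAgf]
      exact hz
    · exact CompHom.ext' (funext hPgf) (funext hAgf) (funext hEgf)
    · exact CompHom.ext' (funext hPfg) (funext hAfg) (funext hEfg)
end

section
/- The category Sys over a colimit-preserving Sen has pushouts; concretely, the pushout of component morphisms τ₁ : C₀ → C₁ and τ₂ : C₀ → C₂ has as underlying signature the componentwise pushout in Set³ of the underlying signature morphisms, and its prescriptions, descriptions, and event-observation sets are the unions of the direct images of those of C₁ and C₂ along the pushout injections. -/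
open CategoryTheory

open Limits

/-- The component structure on the componentwise pushout signature
`⟨QP, QA, QE⟩`: prescriptions, descriptions and event-observation sets are the
unions of the direct images of those of `C₁` and `C₂` along the pushout
injections. -/
def pushoutComp (Sen : Type ⥤ Type) (C₁ C₂ : Component Sen) {QP QA QE : Type}
    (iP₁ : C₁.P → QP) (iP₂ : C₂.P → QP) (iA₁ : C₁.A → QA) (iA₂ : C₂.A → QA)
    (iE₁ : C₁.E → QE) (iE₂ : C₂.E → QE) : Component Sen where
  P := QP
  A := QA
  E := QE
  pres x := (⋃ a ∈ {a : C₁.A | iA₁ a = x}, Sen.map (TypeCat.ofHom iP₁) '' C₁.pres a) ∪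
            (⋃ a ∈ {a : C₂.A | iA₂ a = x}, Sen.map (TypeCat.ofHom iP₂) '' C₂.pres a)
  desc x := (⋃ a ∈ {a : C₁.A | iA₁ a = x}, Sen.map (TypeCat.ofHom iP₁) '' C₁.desc a) ∪
            (⋃ a ∈ {a : C₂.A | iA₂ a = x}, Sen.map (TypeCat.ofHom iP₂) '' C₂.desc a)
  obs x := (⋃ e ∈ {e : C₁.E | iE₁ e = x}, iA₁ '' C₁.obs e) ∪
           (⋃ e ∈ {e : C₂.E | iE₂ e = x}, iA₂ '' C₂.obs e)

section Aux

variable {Sen : Type ⥤ Type}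

/-- The first injection into the pushout component. -/
def pushoutInl (Sen : Type ⥤ Type) (C₁ C₂ : Component Sen) {QP QA QE : Type}
    (iP₁ : C₁.P → QP) (iP₂ : C₂.P → QP) (iA₁ : C₁.A → QA) (iA₂ : C₂.A → QA)
    (iE₁ : C₁.E → QE) (iE₂ : C₂.E → QE) :
    CompHom C₁ (pushoutComp Sen C₁ C₂ iP₁ iP₂ iA₁ iA₂ iE₁ iE₂) where
  σP := iP₁
  σA := iA₁
  σE := iE₁
  hpres a := fun x hx => Or.inl (Set.mem_biUnion (by exact rfl) hx)
  hdesc a := fun x hx => Or.inl (Set.mem_biUnion (by exact rfl) hx)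
  hobs e := fun x hx => Or.inl (Set.mem_biUnion (by exact rfl) hx)

/-- The second injection into the pushout component. -/
def pushoutInr (Sen : Type ⥤ Type) (C₁ C₂ : Component Sen) {QP QA QE : Type}
    (iP₁ : C₁.P → QP) (iP₂ : C₂.P → QP) (iA₁ : C₁.A → QA) (iA₂ : C₂.A → QA)
    (iE₁ : C₁.E → QE) (iE₂ : C₂.E → QE) :
    CompHom C₂ (pushoutComp Sen C₁ C₂ iP₁ iP₂ iA₁ iA₂ iE₁ iE₂) where
  σP := iP₂
  σA := iA₂
  σE := iE₂
  hpres a := fun x hx => Or.inr (Set.mem_biUnion (by exact rfl) hx)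
  hdesc a := fun x hx => Or.inr (Set.mem_biUnion (by exact rfl) hx)
  hobs e := fun x hx => Or.inr (Set.mem_biUnion (by exact rfl) hx)

/-- Core lemma: the concrete pushout property. -/
theorem concrete_pushout (Sen : Type ⥤ Type)
    {C₀ C₁ C₂ : Component Sen} (τ₁ : CompHom C₀ C₁) (τ₂ : CompHom C₀ C₂)
    {QP QA QE : Type}
    (iP₁ : C₁.P → QP) (iP₂ : C₂.P → QP)
    (hPcomm : iP₁ ∘ τ₁.σP = iP₂ ∘ τ₂.σP)
    (hPuniv : ∀ (T : Type) (h₁ : C₁.P → T) (h₂ : C₂.P → T),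
      h₁ ∘ τ₁.σP = h₂ ∘ τ₂.σP → ∃! u : QP → T, u ∘ iP₁ = h₁ ∧ u ∘ iP₂ = h₂)
    (iA₁ : C₁.A → QA) (iA₂ : C₂.A → QA)
    (hAcomm : iA₁ ∘ τ₁.σA = iA₂ ∘ τ₂.σA)
    (hAuniv : ∀ (T : Type) (h₁ : C₁.A → T) (h₂ : C₂.A → T),
      h₁ ∘ τ₁.σA = h₂ ∘ τ₂.σA → ∃! u : QA → T, u ∘ iA₁ = h₁ ∧ u ∘ iA₂ = h₂)
    (iE₁ : C₁.E → QE) (iE₂ : C₂.E → QE)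
    (hEcomm : iE₁ ∘ τ₁.σE = iE₂ ∘ τ₂.σE)
    (hEuniv : ∀ (T : Type) (h₁ : C₁.E → T) (h₂ : C₂.E → T),
      h₁ ∘ τ₁.σE = h₂ ∘ τ₂.σE → ∃! u : QE → T, u ∘ iE₁ = h₁ ∧ u ∘ iE₂ = h₂) :
    ∃ (j₁ : CompHom C₁ (pushoutComp Sen C₁ C₂ iP₁ iP₂ iA₁ iA₂ iE₁ iE₂))
      (j₂ : CompHom C₂ (pushoutComp Sen C₁ C₂ iP₁ iP₂ iA₁ iA₂ iE₁ iE₂)),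
      j₁.σP = iP₁ ∧ j₁.σA = iA₁ ∧ j₁.σE = iE₁ ∧
      j₂.σP = iP₂ ∧ j₂.σA = iA₂ ∧ j₂.σE = iE₂ ∧
      τ₁.comp j₁ = τ₂.comp j₂ ∧
      ∀ (D : Component Sen) (g₁ : CompHom C₁ D) (g₂ : CompHom C₂ D),
        τ₁.comp g₁ = τ₂.comp g₂ →
        ∃! u : CompHom (pushoutComp Sen C₁ C₂ iP₁ iP₂ iA₁ iA₂ iE₁ iE₂) D,
          j₁.comp u = g₁ ∧ j₂.comp u = g₂ := by
  refine ⟨pushoutInl Sen C₁ C₂ iP₁ iP₂ iA₁ iA₂ iE₁ iE₂,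
    pushoutInr Sen C₁ C₂ iP₁ iP₂ iA₁ iA₂ iE₁ iE₂,
    rfl, rfl, rfl, rfl, rfl, rfl, ?_, ?_⟩
  · exact CompHom.ext' hPcomm hAcomm hEcomm
  · intro D g₁ g₂ hg
    have hgP : g₁.σP ∘ τ₁.σP = g₂.σP ∘ τ₂.σP := congrArg CompHom.σP hg
    have hgA : g₁.σA ∘ τ₁.σA = g₂.σA ∘ τ₂.σA := congrArg CompHom.σA hg
    have hgE : g₁.σE ∘ τ₁.σE = g₂.σE ∘ τ₂.σE := congrArg CompHom.σE hg
    obtain ⟨uP, ⟨huP₁, huP₂⟩, huPuniq⟩ := hPuniv D.P g₁.σP g₂.σP hgP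
    obtain ⟨uA, ⟨huA₁, huA₂⟩, huAuniq⟩ := hAuniv D.A g₁.σA g₂.σA hgA
    obtain ⟨uE, ⟨huE₁, huE₂⟩, huEuniq⟩ := hEuniv D.E g₁.σE g₂.σE hgE
    have hmap₁ : ∀ y, Sen.map (TypeCat.ofHom uP) (Sen.map (TypeCat.ofHom iP₁) y) =
        Sen.map (TypeCat.ofHom g₁.σP) y := by
      intro y
      have h2 : TypeCat.ofHom iP₁ ≫ TypeCat.ofHom uP = TypeCat.ofHom g₁.σP := by
        rw [← huP₁]; rfl
      calc Sen.map (TypeCat.ofHom uP) (Sen.map (TypeCat.ofHom iP₁) y)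
          = Sen.map (TypeCat.ofHom iP₁ ≫ TypeCat.ofHom uP) y := by rw [Sen.map_comp]; rfl
        _ = Sen.map (TypeCat.ofHom g₁.σP) y := by rw [h2]
    have hmap₂ : ∀ y, Sen.map (TypeCat.ofHom uP) (Sen.map (TypeCat.ofHom iP₂) y) =
        Sen.map (TypeCat.ofHom g₂.σP) y := by
      intro y
      have h2 : TypeCat.ofHom iP₂ ≫ TypeCat.ofHom uP = TypeCat.ofHom g₂.σP := by
        rw [← huP₂]; rfl
      calc Sen.map (TypeCat.ofHom uP) (Sen.map (TypeCat.ofHom iP₂) y)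
          = Sen.map (TypeCat.ofHom iP₂ ≫ TypeCat.ofHom uP) y := by rw [Sen.map_comp]; rfl
        _ = Sen.map (TypeCat.ofHom g₂.σP) y := by rw [h2]
    refine ⟨⟨uP, uA, uE, ?_, ?_, ?_⟩, ⟨?_, ?_⟩, ?_⟩
    · intro x s hs
      obtain ⟨t, ht, rfl⟩ := hs
      rcases ht with h | h
      · obtain ⟨a, (ha : iA₁ a = x), y, hy, rfl⟩ := Set.mem_iUnion₂.mp (h : t ∈ ⋃ a ∈ {a : C₁.A | iA₁ a = x}, Sen.map (TypeCat.ofHom iP₁) '' C₁.pres a)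
        refine (congrArg (· ∈ D.pres (uA x)) (hmap₁ y)).mpr ?_
        have : D.pres (uA x) = D.pres (g₁.σA a) := by rw [← ha, ← congrFun huA₁ a]; rfl
        rw [this]
        exact g₁.hpres a ⟨y, hy, rfl⟩
      · obtain ⟨a, (ha : iA₂ a = x), y, hy, rfl⟩ := Set.mem_iUnion₂.mp (h : t ∈ ⋃ a ∈ {a : C₂.A | iA₂ a = x}, Sen.map (TypeCat.ofHom iP₂) '' C₂.pres a)
        refine (congrArg (· ∈ D.pres (uA x)) (hmap₂ y)).mpr ?_
        have : D.pres (uA x) = D.pres (g₂.σA a) := by rw [← ha, ← congrFun huA₂ a]; rfl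
        rw [this]
        exact g₂.hpres a ⟨y, hy, rfl⟩
    · intro x s hs
      obtain ⟨t, ht, rfl⟩ := hs
      rcases ht with h | h
      · obtain ⟨a, (ha : iA₁ a = x), y, hy, rfl⟩ := Set.mem_iUnion₂.mp (h : t ∈ ⋃ a ∈ {a : C₁.A | iA₁ a = x}, Sen.map (TypeCat.ofHom iP₁) '' C₁.desc a)
        refine (congrArg (· ∈ D.desc (uA x)) (hmap₁ y)).mpr ?_
        have : D.desc (uA x) = D.desc (g₁.σA a) := by rw [← ha, ← congrFun huA₁ a]; rfl
        rw [this]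
        exact g₁.hdesc a ⟨y, hy, rfl⟩
      · obtain ⟨a, (ha : iA₂ a = x), y, hy, rfl⟩ := Set.mem_iUnion₂.mp (h : t ∈ ⋃ a ∈ {a : C₂.A | iA₂ a = x}, Sen.map (TypeCat.ofHom iP₂) '' C₂.desc a)
        refine (congrArg (· ∈ D.desc (uA x)) (hmap₂ y)).mpr ?_
        have : D.desc (uA x) = D.desc (g₂.σA a) := by rw [← ha, ← congrFun huA₂ a]; rfl
        rw [this]
        exact g₂.hdesc a ⟨y, hy, rfl⟩
    · intro x s hs
      obtain ⟨t, ht, rfl⟩ := hs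
      rcases ht with h | h
      · obtain ⟨e, (he : iE₁ e = x), a, ha, rfl⟩ := Set.mem_iUnion₂.mp (h : t ∈ ⋃ e ∈ {e : C₁.E | iE₁ e = x}, iA₁ '' C₁.obs e)
        have h1 : uA (iA₁ a) = g₁.σA a := congrFun huA₁ a
        have h2 : D.obs (uE x) = D.obs (g₁.σE e) := by rw [← he, ← congrFun huE₁ e]; rfl
        rw [h1, h2]
        exact g₁.hobs e ⟨a, ha, rfl⟩
      · obtain ⟨e, (he : iE₂ e = x), a, ha, rfl⟩ := Set.mem_iUnion₂.mp (h : t ∈ ⋃ e ∈ {e : C₂.E | iE₂ e = x}, iA₂ '' C₂.obs e)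
        have h1 : uA (iA₂ a) = g₂.σA a := congrFun huA₂ a
        have h2 : D.obs (uE x) = D.obs (g₂.σE e) := by rw [← he, ← congrFun huE₂ e]; rfl
        rw [h1, h2]
        exact g₂.hobs e ⟨a, ha, rfl⟩
    · exact CompHom.ext' huP₁ huA₁ huE₁
    · exact CompHom.ext' huP₂ huA₂ huE₂
    · intro v ⟨hv₁, hv₂⟩
      refine CompHom.ext' ?_ ?_ ?_
      · exact huPuniq v.σP ⟨congrArg CompHom.σP hv₁, congrArg CompHom.σP hv₂⟩
      · exact huAuniq v.σA ⟨congrArg CompHom.σA hv₁, congrArg CompHom.σA hv₂⟩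
      · exact huEuniq v.σE ⟨congrArg CompHom.σE hv₁, congrArg CompHom.σE hv₂⟩

/-- Pushouts exist in `Type` with a pointwise universal property. -/
theorem type_pushout_univ {X Y Z : Type} (f : X → Y) (g : X → Z) :
    ∃ (Q : Type) (i₁ : Y → Q) (i₂ : Z → Q), i₁ ∘ f = i₂ ∘ g ∧
      ∀ (T : Type) (h₁ : Y → T) (h₂ : Z → T), h₁ ∘ f = h₂ ∘ g →
        ∃! u : Q → T, u ∘ i₁ = h₁ ∧ u ∘ i₂ = h₂ := by
  classical
  set R : (Y ⊕ Z) → (Y ⊕ Z) → Prop :=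
    fun p q => ∃ x, p = Sum.inl (f x) ∧ q = Sum.inr (g x) with hR
  refine ⟨Quot R, fun y => Quot.mk R (Sum.inl y), fun z => Quot.mk R (Sum.inr z), ?_, ?_⟩
  · exact funext fun x => Quot.sound ⟨x, rfl, rfl⟩
  · intro T h₁ h₂ h
    have hk : ∀ p q, R p q → Sum.elim h₁ h₂ p = Sum.elim h₁ h₂ q := by
      rintro p q ⟨x, rfl, rfl⟩
      exact congrFun h x
    refine ⟨Quot.lift (Sum.elim h₁ h₂) hk, ⟨rfl, rfl⟩, ?_⟩
    intro v ⟨hv₁, hv₂⟩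
    funext q
    induction q using Quot.ind with
    | _ p =>
      cases p with
      | inl y => exact congrFun hv₁ y
      | inr z => exact congrFun hv₂ z

/-- `Sys` has pushouts. -/
theorem sys_hasPushouts (Sen : Type ⥤ Type) : HasPushouts (Component Sen) := by
  have key : ∀ {C₀ C₁ C₂ : Component Sen} (τ₁ : C₀ ⟶ C₁) (τ₂ : C₀ ⟶ C₂),
      HasColimit (span τ₁ τ₂) := by
    intro C₀ C₁ C₂ τ₁ τ₂
    obtain ⟨QP, iP₁, iP₂, hPcomm, hPuniv⟩ := type_pushout_univ τ₁.σP τ₂.σP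
    obtain ⟨QA, iA₁, iA₂, hAcomm, hAuniv⟩ := type_pushout_univ τ₁.σA τ₂.σA
    obtain ⟨QE, iE₁, iE₂, hEcomm, hEuniv⟩ := type_pushout_univ τ₁.σE τ₂.σE
    obtain ⟨j₁, j₂, -, -, -, -, -, -, w, huniv⟩ :=
      concrete_pushout Sen τ₁ τ₂ iP₁ iP₂ hPcomm hPuniv iA₁ iA₂ hAcomm hAuniv
        iE₁ iE₂ hEcomm hEuniv
    have hcl : IsColimit (PushoutCocone.mk (f := τ₁) (g := τ₂) j₁ j₂ w) := by
      apply PushoutCocone.IsColimit.mk w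
        (desc := fun s => (huniv s.pt s.inl s.inr s.condition).choose)
      · exact fun s => ((huniv s.pt s.inl s.inr s.condition).choose_spec.1).1
      · exact fun s => ((huniv s.pt s.inl s.inr s.condition).choose_spec.1).2
      · intro s m hm₁ hm₂
        exact (huniv s.pt s.inl s.inr s.condition).choose_spec.2 m ⟨hm₁, hm₂⟩
    exact HasColimit.mk ⟨_, hcl⟩
  exact @hasPushouts_of_hasColimit_span _ _ (fun {X Y Z f g} => key f g)

end Aux

/-- `Sys` over a colimit-preserving `Sen` has pushouts; concretely,
given `τ₁ : C₀ → C₁`, `τ₂ : C₀ → C₂` and a componentwise pushout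
`⟨QP, QA, QE⟩` in `Set³` of the underlying signature morphisms, the component
`pushoutComp` together with the evident injections is a pushout of `τ₁` and
`τ₂` in `Sys`. -/
theorem sys_pushouts (Sen : Type ⥤ Type) [PreservesColimits Sen]
    {C₀ C₁ C₂ : Component Sen} (τ₁ : CompHom C₀ C₁) (τ₂ : CompHom C₀ C₂)
    {QP QA QE : Type}
    (iP₁ : C₁.P → QP) (iP₂ : C₂.P → QP)
    (hPcomm : iP₁ ∘ τ₁.σP = iP₂ ∘ τ₂.σP)
    (hPuniv : ∀ (T : Type) (h₁ : C₁.P → T) (h₂ : C₂.P → T),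
      h₁ ∘ τ₁.σP = h₂ ∘ τ₂.σP → ∃! u : QP → T, u ∘ iP₁ = h₁ ∧ u ∘ iP₂ = h₂)
    (iA₁ : C₁.A → QA) (iA₂ : C₂.A → QA)
    (hAcomm : iA₁ ∘ τ₁.σA = iA₂ ∘ τ₂.σA)
    (hAuniv : ∀ (T : Type) (h₁ : C₁.A → T) (h₂ : C₂.A → T),
      h₁ ∘ τ₁.σA = h₂ ∘ τ₂.σA → ∃! u : QA → T, u ∘ iA₁ = h₁ ∧ u ∘ iA₂ = h₂)
    (iE₁ : C₁.E → QE) (iE₂ : C₂.E → QE)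
    (hEcomm : iE₁ ∘ τ₁.σE = iE₂ ∘ τ₂.σE)
    (hEuniv : ∀ (T : Type) (h₁ : C₁.E → T) (h₂ : C₂.E → T),
      h₁ ∘ τ₁.σE = h₂ ∘ τ₂.σE → ∃! u : QE → T, u ∘ iE₁ = h₁ ∧ u ∘ iE₂ = h₂) :
    HasPushouts (Component Sen) ∧
    ∃ (j₁ : CompHom C₁ (pushoutComp Sen C₁ C₂ iP₁ iP₂ iA₁ iA₂ iE₁ iE₂))
      (j₂ : CompHom C₂ (pushoutComp Sen C₁ C₂ iP₁ iP₂ iA₁ iA₂ iE₁ iE₂)),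
      j₁.σP = iP₁ ∧ j₁.σA = iA₁ ∧ j₁.σE = iE₁ ∧
      j₂.σP = iP₂ ∧ j₂.σA = iA₂ ∧ j₂.σE = iE₂ ∧
      τ₁.comp j₁ = τ₂.comp j₂ ∧
      ∀ (D : Component Sen) (g₁ : CompHom C₁ D) (g₂ : CompHom C₂ D),
        τ₁.comp g₁ = τ₂.comp g₂ →
        ∃! u : CompHom (pushoutComp Sen C₁ C₂ iP₁ iP₂ iA₁ iA₂ iE₁ iE₂) D,
          j₁.comp u = g₁ ∧ j₂.comp u = g₂ := by
  exact ⟨sys_hasPushouts Sen,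
    concrete_pushout Sen τ₁ τ₂ iP₁ iP₂ hPcomm hPuniv iA₁ iA₂ hAcomm hAuniv
      iE₁ iE₂ hEcomm hEuniv⟩
end
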